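/- For all m, n ≥ 0 and -n ≤ k ≤ n, the coefficient identity corresponding to P(x,y) * (cosh(x+y) - (x+y) sinh(x+y)) = cosh(x-y) holds, where P(x,y) = sum_{n≥0} sum_{k=-n}^{n} 2^n p_n(k) x^{n+k} y^{n-k}/((n+k)!(n-k)!), as an identity of formal power series in ℚ[[x,y]]. -/

import Mathlib

noncomputable def p : ℕ → ℤ → ℤ
  | 0, k => if k = 0 then 1 else 0
  | n + 1, k => ∑ j ∈ Finset.Icc (-(n : ℤ)) (n : ℤ), |j - k| * p n j

/-- `P(x,y) = ∑_{n,k} 2^n p_n(k) x^{n+k} y^{n-k}/((n+k)!(n-k)!)` as an element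
of `ℚ[[x,y]]` (variables indexed by `Fin 2`, `x = X 0`, `y = X 1`). -/
noncomputable def Pxy : MvPowerSeries (Fin 2) ℚ := fun d =>
  if (d 0 + d 1) % 2 = 0 then
    ((2 ^ ((d 0 + d 1) / 2) * p ((d 0 + d 1) / 2) (((d 0 : ℤ) - (d 1 : ℤ)) / 2) : ℤ) : ℚ) /
      ((d 0).factorial * (d 1).factorial)
  else 0

/-- `cosh(x+y)` in `ℚ[[x,y]]`: the coefficient of `x^i y^j` is `1/(i! j!)` for
`i + j` even, and `0` otherwise. -/
noncomputable def coshXY : MvPowerSeries (Fin 2) ℚ := fun d =>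
  if (d 0 + d 1) % 2 = 0 then (1 : ℚ) / ((d 0).factorial * (d 1).factorial) else 0

/-- `sinh(x+y)` in `ℚ[[x,y]]`. -/
noncomputable def sinhXY : MvPowerSeries (Fin 2) ℚ := fun d =>
  if (d 0 + d 1) % 2 = 1 then (1 : ℚ) / ((d 0).factorial * (d 1).factorial) else 0

/-- `cosh(x-y)` in `ℚ[[x,y]]`: the coefficient of `x^i y^j` is `(-1)^j/(i! j!)`
for `i + j` even, and `0` otherwise. -/
noncomputable def coshXmY : MvPowerSeries (Fin 2) ℚ := fun d =>
  if (d 0 + d 1) % 2 = 0 then ((-1 : ℚ)) ^ (d 1) / ((d 0).factorial * (d 1).factorial) else 0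

/-- reindexing a sum over a symmetric interval by negation -/
lemma sum_neg_reindex (n : ℕ) (F : ℤ → ℤ) :
    ∑ j ∈ Finset.Icc (-(n : ℤ)) (n : ℤ), F (-j) = ∑ j ∈ Finset.Icc (-(n : ℤ)) (n : ℤ), F j := by
  apply Finset.sum_nbij' (fun i => -i) (fun i => -i)
  · intro a ha; simp only [Finset.mem_Icc] at *; omega
  · intro a ha; simp only [Finset.mem_Icc] at *; omega
  · intro a _; ring
  · intro a _; ring
  · intro a _; rfl

lemma p_symm (n : ℕ) (k : ℤ) : p n (-k) = p n k := by
  induction n generalizing k with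
  | zero => simp [p, neg_eq_zero]
  | succ n ih =>
    show ∑ j ∈ Finset.Icc (-(n : ℤ)) (n : ℤ), |j - -k| * p n j
       = ∑ j ∈ Finset.Icc (-(n : ℤ)) (n : ℤ), |j - k| * p n j
    rw [← sum_neg_reindex n (fun j => |j - -k| * p n j)]
    apply Finset.sum_congr rfl
    intro j _
    rw [ih j]
    congr 1
    rw [abs_sub_comm]
    congr 1
    ring

noncomputable def S (n : ℕ) : ℤ := ∑ j ∈ Finset.Icc (-(n : ℤ)) (n : ℤ), p n j

lemma sum_j_p (n : ℕ) : ∑ j ∈ Finset.Icc (-(n : ℤ)) (n : ℤ), j * p n j = 0 := by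
  have h := sum_neg_reindex n (fun j => j * p n j)
  have h2 : ∑ j ∈ Finset.Icc (-(n : ℤ)) (n : ℤ), (fun j => j * p n j) (-j)
      = ∑ j ∈ Finset.Icc (-(n : ℤ)) (n : ℤ), -(j * p n j) := by
    apply Finset.sum_congr rfl
    intro j _
    show -j * p n (-j) = _
    rw [p_symm]; ring
  rw [h2, Finset.sum_neg_distrib] at h
  omega

lemma p_top (n : ℕ) (k : ℤ) (hk : (n : ℤ) ≤ k) : p (n + 1) k = k * S n := by
  show ∑ j ∈ Finset.Icc (-(n : ℤ)) (n : ℤ), |j - k| * p n j = k * S n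
  have : ∑ j ∈ Finset.Icc (-(n : ℤ)) (n : ℤ), |j - k| * p n j
      = ∑ j ∈ Finset.Icc (-(n : ℤ)) (n : ℤ), (k * p n j - j * p n j) := by
    apply Finset.sum_congr rfl
    intro j hj
    simp only [Finset.mem_Icc] at hj
    rw [abs_of_nonpos (by omega)]
    ring
  rw [this, Finset.sum_sub_distrib, sum_j_p, ← Finset.mul_sum]
  simp [S]

lemma abs_second_diff (j k : ℤ) :
    |j - (k + 1)| + |j - (k - 1)| = 2 * |j - k| + (if j = k then 2 else 0) := by
  rcases lt_trichotomy j k with h | h | h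
  · rw [abs_of_nonpos (by omega), abs_of_nonpos (by omega), abs_of_nonpos (by omega),
      if_neg (by omega)]
    ring
  · subst h
    simp
  · rw [abs_of_nonneg (by omega), abs_of_nonneg (by omega), abs_of_nonneg (by omega),
      if_neg (by omega)]
    ring

lemma p_second_diff (n : ℕ) (k : ℤ) :
    p (n + 1) (k + 1) + p (n + 1) (k - 1)
      = 2 * p (n + 1) k + (if k ∈ Finset.Icc (-(n : ℤ)) (n : ℤ) then 2 * p n k else 0) := by
  show (∑ j ∈ Finset.Icc (-(n : ℤ)) (n : ℤ), |j - (k+1)| * p n j)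
      + (∑ j ∈ Finset.Icc (-(n : ℤ)) (n : ℤ), |j - (k-1)| * p n j)
      = 2 * (∑ j ∈ Finset.Icc (-(n : ℤ)) (n : ℤ), |j - k| * p n j) + _
  rw [← Finset.sum_add_distrib, Finset.mul_sum]
  have : ∀ j ∈ Finset.Icc (-(n : ℤ)) (n : ℤ),
      |j - (k+1)| * p n j + |j - (k-1)| * p n j
      = 2 * (|j - k| * p n j) + (if j = k then 2 * p n j else 0) := by
    intro j _
    have h := abs_second_diff j k
    by_cases hj : j = k
    · rw [if_pos hj] at h ⊢
      linear_combination (p n j) * h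
    · rw [if_neg hj] at h ⊢
      linear_combination (p n j) * h
  rw [Finset.sum_congr rfl this, Finset.sum_add_distrib]
  congr 1
  by_cases hk : k ∈ Finset.Icc (-(n : ℤ)) (n : ℤ)
  · rw [if_pos hk, Finset.sum_ite_eq' (Finset.Icc (-(n : ℤ)) (n : ℤ)) k (fun j => 2 * p n j),
      if_pos hk]

  · rw [if_neg hk]
    apply Finset.sum_eq_zero
    intro j hj
    rw [if_neg (by rintro rfl; exact hk hj)]

abbrev Arr := ℕ → ℕ → ℚ

noncomputable def conv (u v : Arr) : Arr := fun a b =>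
  ∑ i ∈ Finset.range (a + 1), (a.choose i : ℚ) *
    ∑ j ∈ Finset.range (b + 1), (b.choose j : ℚ) * u i j * v (a - i) (b - j)

def Dx (u : Arr) : Arr := fun a b => u (a + 1) b
def Dy (u : Arr) : Arr := fun a b => u a (b + 1)
def T (u : Arr) : Arr := fun a b => u b a

lemma pascal_sum (a : ℕ) (F : ℕ → ℕ → ℚ) :
    ∑ i ∈ Finset.range (a + 2), ((a+1).choose i : ℚ) * F i (a + 1 - i)
    = ∑ i ∈ Finset.range (a + 1), (a.choose i : ℚ) * F (i+1) (a - i)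
      + ∑ i ∈ Finset.range (a + 1), (a.choose i : ℚ) * F i (a + 1 - i) := by
  rw [Finset.sum_range_succ']
  have h1 : ∀ i ∈ Finset.range (a + 1), ((a+1).choose (i+1) : ℚ) * F (i+1) (a + 1 - (i+1))
      = (a.choose i : ℚ) * F (i+1) (a - i) + (a.choose (i+1) : ℚ) * F (i+1) (a - i) := by
    intro i _
    rw [Nat.choose_succ_succ, Nat.succ_sub_succ]
    push_cast
    ring
  rw [Finset.sum_congr rfl h1, Finset.sum_add_distrib]
  have h2 : ∑ i ∈ Finset.range (a + 1), ((a).choose (i+1) : ℚ) * F (i+1) (a - i)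
      + ((a+1).choose 0 : ℚ) * F 0 (a + 1 - 0)
      = ∑ i ∈ Finset.range (a + 1), (a.choose i : ℚ) * F i (a + 1 - i) := by
    have e1 := Finset.sum_range_succ' (fun i => (a.choose i : ℚ) * F i (a + 1 - i)) (a + 1)
    have e2 := Finset.sum_range_succ (fun i => (a.choose i : ℚ) * F i (a + 1 - i)) (a + 1)
    simp only [Nat.succ_sub_succ] at e1
    rw [Nat.choose_eq_zero_of_lt (by omega)] at e2
    push_cast at e2
    simp only [Nat.choose_zero_right, Nat.cast_one, one_mul] at e1 e2 ⊢
    rw [zero_mul, add_zero] at e2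
    rw [← e2, e1]
  rw [add_assoc, h2]

lemma convX (u v : Arr) (a b : ℕ) :
    conv u v (a + 1) b = conv (Dx u) v a b + conv u (Dx v) a b := by
  show ∑ i ∈ Finset.range (a + 2), ((a+1).choose i : ℚ) *
      (fun i m => ∑ j ∈ Finset.range (b + 1), (b.choose j : ℚ) * u i j * v m (b - j)) i (a+1-i) = _
  rw [pascal_sum a (fun i m => ∑ j ∈ Finset.range (b + 1), (b.choose j : ℚ) * u i j * v m (b - j))]
  congr 1
  apply Finset.sum_congr rfl
  intro i hi
  simp only [Finset.mem_range] at hi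
  have : a + 1 - i = (a - i) + 1 := by omega
  rw [this]
  rfl

lemma conv_transpose (u v : Arr) (a b : ℕ) : conv u v a b = conv (T u) (T v) b a := by
  unfold conv
  simp only [Finset.mul_sum]
  rw [Finset.sum_comm]
  apply Finset.sum_congr rfl
  intro j _
  apply Finset.sum_congr rfl
  intro i _
  show _ = (b.choose j : ℚ) * ((a.choose i : ℚ) * u i j * v (a-i) (b-j))
  ring

lemma convY (u v : Arr) (a b : ℕ) :
    conv u v a (b + 1) = conv (Dy u) v a b + conv u (Dy v) a b := by
  rw [conv_transpose, convX, conv_transpose (Dy u) v, conv_transpose u (Dy v)]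
  rfl

lemma conv_left_eq (u1 u2 v : Arr) (h : ∀ i j, u1 i j = u2 i j) (a b : ℕ) :
    conv u1 v a b = conv u2 v a b := by
  unfold conv
  apply Finset.sum_congr rfl
  intro i _
  congr 1
  apply Finset.sum_congr rfl
  intro j _
  rw [h]

lemma conv_add_left (u1 u2 v : Arr) (a b : ℕ) :
    conv (fun i j => u1 i j + u2 i j) v a b = conv u1 v a b + conv u2 v a b := by
  unfold conv
  rw [← Finset.sum_add_distrib]
  apply Finset.sum_congr rfl
  intro i _
  rw [← mul_add, ← Finset.sum_add_distrib]
  congr 1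
  apply Finset.sum_congr rfl
  intro j _
  ring

lemma conv_mul_left (c : ℚ) (u v : Arr) (a b : ℕ) :
    conv (fun i j => c * u i j) v a b = c * conv u v a b := by
  unfold conv
  rw [Finset.mul_sum]
  apply Finset.sum_congr rfl
  intro i _
  rw [Finset.mul_sum, Finset.mul_sum, Finset.mul_sum]
  apply Finset.sum_congr rfl
  intro j _
  ring

section S4
variable (u v : Arr)

/-- discrete PDE Leibniz: if `u` satisfies the wave-type identity and `v` is
"flat" (a function of `i+j`), then `conv u v` satisfies the identity. -/
lemma conv_D2 (hu : ∀ i j, u (i+2) j + u i (j+2) = 4 * u i j + 2 * u (i+1) (j+1))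
    (hv : ∀ i j, v (i+1) j = v i (j+1)) (a b : ℕ) :
    conv u v (a+2) b + conv u v a (b+2)
      = 4 * conv u v a b + 2 * conv u v (a+1) (b+1) := by
  have hv' : Dx v = Dy v := funext fun i => funext fun j => hv i j
  have e1 : conv u v (a+2) b
      = conv (Dx (Dx u)) v a b + conv (Dx u) (Dy v) a b
        + (conv (Dx u) (Dy v) a b + conv u (Dy (Dy v)) a b) := by
    rw [show a + 2 = (a+1)+1 from rfl, convX, convX, convX, hv']
    have h2 : Dx (Dy v) = Dy (Dy v) := by
      rw [show Dx (Dy v) = Dy (Dx v) from rfl, hv']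
    rw [h2]
  have e2 : conv u v a (b+2)
      = conv (Dy (Dy u)) v a b + conv (Dy u) (Dy v) a b
        + (conv (Dy u) (Dy v) a b + conv u (Dy (Dy v)) a b) := by
    rw [show b + 2 = (b+1)+1 from rfl, convY, convY, convY]
  have e3 : conv u v (a+1) (b+1)
      = conv (Dy (Dx u)) v a b + conv (Dx u) (Dy v) a b
        + (conv (Dy u) (Dy v) a b + conv u (Dy (Dy v)) a b) := by
    rw [convX, convY, convY, hv']
  have e4 : conv (Dx (Dx u)) v a b + conv (Dy (Dy u)) v a b
      = 4 * conv u v a b + 2 * conv (Dy (Dx u)) v a b := by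
    rw [← conv_add_left]
    rw [conv_left_eq (fun i j => Dx (Dx u) i j + Dy (Dy u) i j)
      (fun i j => 4 * u i j + 2 * (Dy (Dx u)) i j) v (fun i j => by
        have := hu i j
        show u (i+2) j + u i (j+2) = _
        rw [this]; rfl) a b]
    rw [conv_add_left, conv_mul_left, conv_mul_left]
  rw [e1, e2, e3]
  linarith [e4]

lemma conv_parity (hu : ∀ i j, (i + j) % 2 = 1 → u i j = 0)
    (hv : ∀ i j, (i + j) % 2 = 1 → v i j = 0) (a b : ℕ) (hab : (a + b) % 2 = 1) :
    conv u v a b = 0 := by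
  unfold conv
  apply Finset.sum_eq_zero
  intro i hi
  simp only [Finset.mem_range] at hi
  rw [mul_eq_zero]
  right
  apply Finset.sum_eq_zero
  intro j hj
  simp only [Finset.mem_range] at hj
  rcases Nat.even_or_odd (i + j) with h | h
  · rw [Nat.even_iff] at h
    have : ((a - i) + (b - j)) % 2 = 1 := by omega
    rw [hv _ _ this]; ring
  · have : (i + j) % 2 = 1 := Nat.odd_iff.mp h
    rw [hu _ _ this]; ring

lemma conv_symm (hu : ∀ i j, u i j = u j i) (hv : ∀ i j, v i j = v j i) (a b : ℕ) :
    conv u v a b = conv u v b a := by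
  rw [conv_transpose]
  apply Finset.sum_congr rfl
  intro i _
  congr 1
  apply Finset.sum_congr rfl
  intro j _
  simp only [T]
  rw [hu j i, hv (b - i) (a - j)]

lemma conv_sumdep (hu : ∀ i j, u (i+1) j = u i (j+1)) (hv : ∀ i j, v (i+1) j = v i (j+1)) :
    ∀ b a, conv u v a b = conv u v (a + b) 0 := by
  intro b
  induction b with
  | zero => intro a; rfl
  | succ b ih =>
    intro a
    have hu' : Dx u = Dy u := funext fun i => funext fun j => hu i j
    have hv' : Dx v = Dy v := funext fun i => funext fun j => hv i j
    rw [convY, ← hu', ← hv', ← convX, ih]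
    congr 1
    omega
end S4

/-- normalized coefficients of `1/(cosh w - w sinh w)`: `Ht L = L! * h_L`. -/
def Ht : ℕ → ℚ
  | 0 => 1
  | (L+1) =>
    if (L+1) % 2 = 1 then 0
    else ∑ v ∈ (Finset.Icc 1 (L+1)).attach,
      if v.1 % 2 = 0 then (((L+1).choose v.1 : ℚ)) * ((v.1 : ℚ) - 1) * Ht (L + 1 - v.1) else 0
  decreasing_by
    have := v.2
    simp only [Finset.mem_Icc] at this
    omega

lemma Ht_odd (L : ℕ) (h : L % 2 = 1) : Ht L = 0 := by
  cases L with
  | zero => omega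
  | succ L => rw [Ht, if_pos h]

lemma Ht_zero : Ht 0 = 1 := by simp [Ht]

/-- the defining identity `h * g = 1` in normalized coefficients. -/
lemma GG (t : ℕ) (ht : t % 2 = 0) :
    ∑ v ∈ Finset.range (t + 1),
      (if v % 2 = 0 then (t.choose v : ℚ) * (1 - (v : ℚ)) * Ht (t - v) else 0)
    = if t = 0 then 1 else 0 := by
  cases t with
  | zero => simp [Ht]
  | succ L =>
    rw [if_neg (by omega)]
    rw [Finset.sum_range_succ']
    push_cast
    have hrest : ∑ i ∈ Finset.range (L+1),
        (if (i+1) % 2 = 0 then ((L+1).choose (i+1) : ℚ) * (1 - ((i:ℚ)+1)) * Ht (L - i) else 0)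
        = - Ht (L+1) := by
      have unf : Ht (L+1) = ∑ v ∈ Finset.Icc 1 (L+1),
          (if v % 2 = 0 then (((L+1).choose v : ℚ)) * ((v : ℚ) - 1) * Ht (L + 1 - v) else 0) := by
        rw [Ht, if_neg (by omega)]
        rw [Finset.sum_attach (Finset.Icc 1 (L+1))
          (fun v => if v % 2 = 0 then (((L+1).choose v : ℚ)) * ((v : ℚ) - 1) * Ht (L + 1 - v) else 0)]
      rw [unf, ← Finset.sum_neg_distrib]
      apply Finset.sum_nbij' (fun i => i + 1) (fun v => v - 1)
      · intro a ha; simp only [Finset.mem_range, Finset.mem_Icc] at *; omega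
      · intro a ha; simp only [Finset.mem_range, Finset.mem_Icc] at *; omega
      · intro a _; omega
      · intro a ha; simp only [Finset.mem_Icc] at ha; omega
      · intro a _
        simp only [Nat.succ_sub_succ]
        by_cases h : (a + 1) % 2 = 0
        · rw [if_pos h, if_pos h]
          push_cast
          ring
        · rw [if_neg h, if_neg h]
          ring
    rw [hrest]
    norm_num

noncomputable def chat : Arr := fun i j => if (i + j) % 2 = 0 then (-1 : ℚ)^j else 0
noncomputable def Harr : Arr := fun i j => Ht (i + j)
noncomputable def ghat : Arr := fun i j => if (i + j) % 2 = 0 then 1 - (i:ℚ) - (j:ℚ) else 0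
noncomputable def phat : Arr := fun a b =>
  if (a + b) % 2 = 0 then ((2 ^ ((a+b)/2) * p ((a+b)/2) (((a:ℤ) - (b:ℤ))/2) : ℤ) : ℚ) else 0

lemma neg_one_pow_parity (i j : ℕ) (h : (i + j) % 2 = 0) : (-1 : ℚ)^j = (-1 : ℚ)^i := by
  have h1 : (-1:ℚ)^(i+i) = 1 := by
    rw [← two_mul, pow_mul]; norm_num
  have h2 : (-1:ℚ)^(i+j) = 1 := Even.neg_one_pow (Nat.even_iff.mpr h)
  calc (-1:ℚ)^j = ((-1:ℚ)^(i+i)) * (-1:ℚ)^j := by rw [h1]; ring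
    _ = (-1:ℚ)^i * ((-1:ℚ)^(i+j)) := by rw [pow_add, pow_add]; ring
    _ = (-1:ℚ)^i := by rw [h2]; ring

lemma chat_symm (i j : ℕ) : chat i j = chat j i := by
  unfold chat
  by_cases h : (i + j) % 2 = 0
  · rw [if_pos h, if_pos (by omega), neg_one_pow_parity i j h]
  · rw [if_neg h, if_neg (by omega)]

lemma chat_parity (i j : ℕ) (h : (i + j) % 2 = 1) : chat i j = 0 := by
  unfold chat; rw [if_neg (by omega)]

lemma chat_pde (i j : ℕ) :
    chat (i+2) j + chat i (j+2) = 4 * chat i j + 2 * chat (i+1) (j+1) := by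
  unfold chat
  by_cases h : (i + j) % 2 = 0
  · rw [if_pos (by omega), if_pos (by omega), if_pos h, if_pos (by omega)]
    rw [pow_add, pow_add]
    ring
  · rw [if_neg (by omega), if_neg (by omega), if_neg h, if_neg (by omega)]
    ring

lemma Harr_flat (i j : ℕ) : Harr (i+1) j = Harr i (j+1) := by
  unfold Harr; congr 1; omega

lemma Harr_parity (i j : ℕ) (h : (i + j) % 2 = 1) : Harr i j = 0 := Ht_odd _ h

lemma Harr_symm (i j : ℕ) : Harr i j = Harr j i := by
  unfold Harr; congr 1; omega

lemma ghat_flat (i j : ℕ) : ghat (i+1) j = ghat i (j+1) := by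
  unfold ghat
  by_cases h : (i + 1 + j) % 2 = 0
  · rw [if_pos h, if_pos (by omega)]
    push_cast; ring
  · rw [if_neg h, if_neg (by omega)]

lemma ghat_parity (i j : ℕ) (h : (i + j) % 2 = 1) : ghat i j = 0 := by
  unfold ghat; rw [if_neg (by omega)]

lemma phat_even_eq (a b m : ℕ) (k : ℤ) (hm : a + b = 2*m) (hk : (a:ℤ) - b = 2*k) :
    phat a b = ((2 ^ m * p m k : ℤ) : ℚ) := by
  unfold phat
  rw [if_pos (by omega), show (a+b)/2 = m by omega, hk,
    Int.mul_ediv_cancel_left k (by norm_num)]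

lemma phat_odd (a b : ℕ) (h : (a + b) % 2 = 1) : phat a b = 0 := by
  unfold phat; rw [if_neg (by omega)]

lemma parity_mk (a b : ℕ) (h : (a + b) % 2 = 0) :
    ∃ (m : ℕ) (k : ℤ), a + b = 2*m ∧ (a:ℤ) - b = 2*k ∧ -(m:ℤ) ≤ k ∧ k ≤ m := by
  refine ⟨(a+b)/2, ((a:ℤ) - b)/2, by omega, by omega, by omega, by omega⟩

lemma phat_symm (a b : ℕ) : phat a b = phat b a := by
  by_cases h : (a + b) % 2 = 0
  · obtain ⟨m, k, hm, hk, _, _⟩ := parity_mk a b h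
    rw [phat_even_eq a b m k hm hk, phat_even_eq b a m (-k) (by omega) (by omega),
      p_symm]
  · rw [phat_odd a b (by omega), phat_odd b a (by omega)]

lemma phat_pde (a b : ℕ) :
    phat (a+2) b + phat a (b+2) = 4 * phat a b + 2 * phat (a+1) (b+1) := by
  by_cases h : (a + b) % 2 = 0
  · obtain ⟨m, k, hm, hk, hk1, hk2⟩ := parity_mk a b h
    rw [phat_even_eq a b m k hm hk,
      phat_even_eq (a+2) b (m+1) (k+1) (by omega) (by push_cast; omega),
      phat_even_eq a (b+2) (m+1) (k-1) (by omega) (by push_cast; omega),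
      phat_even_eq (a+1) (b+1) (m+1) k (by omega) (by push_cast; omega)]
    have hsd := p_second_diff m k
    rw [if_pos (Finset.mem_Icc.mpr ⟨hk1, hk2⟩)] at hsd
    have hsd' : ((p (m+1) (k+1) : ℤ) : ℚ) + ((p (m+1) (k-1) : ℤ) : ℚ)
        = 2 * ((p (m+1) k : ℤ) : ℚ) + 2 * ((p m k : ℤ) : ℚ) := by exact_mod_cast hsd
    push_cast
    linear_combination (2:ℚ)^(m+1) * hsd'
  · rw [phat_odd a b (by omega), phat_odd (a+2) b (by omega), phat_odd a (b+2) (by omega),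
      phat_odd (a+1) (b+1) (by omega)]
    ring

lemma phat_edge (M : ℕ) (hM : 1 ≤ M) :
    ((M:ℚ) - 1) * phat (2*M) 0 = (M:ℚ) * phat (2*M - 1) 1 := by
  obtain ⟨M', rfl⟩ : ∃ M', M = M' + 1 := ⟨M - 1, by omega⟩
  rw [phat_even_eq (2*(M'+1)) 0 (M'+1) ((M':ℤ)+1) (by omega) (by push_cast; ring),
    phat_even_eq (2*(M'+1) - 1) 1 (M'+1) (M':ℤ) (by omega) (by push_cast; omega)]
  rw [show ((M':ℤ)+1) = (M':ℤ) + 1 from rfl]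
  rw [p_top M' ((M':ℤ)+1) (by omega), p_top M' (M':ℤ) (by omega)]
  push_cast
  ring

lemma conv_row0 (t : ℕ) :
    conv chat Harr t 0
      = ∑ i ∈ Finset.range (t+1), (if i % 2 = 0 then (t.choose i : ℚ) * Ht (t - i) else 0) := by
  unfold conv
  apply Finset.sum_congr rfl
  intro i hi
  rw [Finset.sum_range_one]
  by_cases h : i % 2 = 0
  · rw [if_pos h]
    simp only [chat, Harr, Nat.add_zero, Nat.choose_zero_right, Nat.cast_one]
    rw [if_pos (by omega)]
    ring
  · rw [if_neg h]
    simp only [chat, Harr, Nat.add_zero, Nat.choose_zero_right, Nat.cast_one]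
    rw [if_neg (by omega)]
    ring

lemma conv_row1 (t : ℕ) :
    conv chat Harr t 1
      = (∑ i ∈ Finset.range (t+1), (if i % 2 = 0 then (t.choose i : ℚ) * Ht (t + 1 - i) else 0))
        - ∑ i ∈ Finset.range (t+1), (if (i+1) % 2 = 0 then (t.choose i : ℚ) * Ht (t - i) else 0) := by
  unfold conv
  rw [← Finset.sum_sub_distrib]
  apply Finset.sum_congr rfl
  intro i hi
  simp only [Finset.mem_range] at hi
  rw [show (1:ℕ) + 1 = 2 from rfl, Finset.sum_range_succ, Finset.sum_range_one]
  have hHa : Harr (t - i) (1 - 0) = Ht (t + 1 - i) := by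
    show Ht (t - i + 1) = Ht (t + 1 - i)
    congr 1
    omega
  have hHb : Harr (t - i) (1 - 1) = Ht (t - i) := rfl
  rw [hHa, hHb]
  simp only [Nat.choose_zero_right, Nat.choose_one_right, Nat.cast_one]
  by_cases h : i % 2 = 0
  · have c0 : chat i 0 = 1 := by simp only [chat, Nat.add_zero]; rw [if_pos (by omega)]; norm_num
    have c1 : chat i 1 = 0 := by simp only [chat]; rw [if_neg (by omega)]
    rw [c0, c1, if_pos h, if_neg (by omega)]
    ring
  · have c0 : chat i 0 = 0 := by simp only [chat, Nat.add_zero]; rw [if_neg (by omega)]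
    have c1 : chat i 1 = -1 := by
      simp only [chat]; rw [if_pos (by omega)]; norm_num
    rw [c0, c1, if_neg h, if_pos (by omega)]
    ring

lemma rhat_edge (M : ℕ) (hM : 1 ≤ M) :
    ((M:ℚ) - 1) * conv chat Harr (2*M) 0 = (M:ℚ) * conv chat Harr (2*M - 1) 1 := by
  have hGG := GG (2*M) (by omega)
  rw [if_neg (by omega)] at hGG
  rw [conv_row0, conv_row1]
  rw [show 2*M - 1 + 1 = 2*M by omega]
  have e3 : ∑ v ∈ Finset.range (2*M+1),
        (if v % 2 = 0 ∧ 1 ≤ v then ((2*M-1).choose (v-1) : ℚ) * Ht (2*M - v) else 0)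
      = ∑ i ∈ Finset.range (2*M), (if (i+1) % 2 = 0 then ((2*M-1).choose i : ℚ) * Ht (2*M-1-i) else 0) := by
    rw [Finset.sum_range_succ']
    have h0 : (if (0:ℕ) % 2 = 0 ∧ 1 ≤ (0:ℕ) then ((2*M-1).choose (0-1) : ℚ) * Ht (2*M - 0) else 0) = 0 := by
      rw [if_neg (by omega)]
    rw [h0, add_zero]
    apply Finset.sum_congr rfl
    intro i hi
    by_cases h : (i+1) % 2 = 0
    · rw [if_pos ⟨h, by omega⟩, if_pos h]
      congr 2 <;> omega
    · rw [if_neg (by omega), if_neg h]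
  have e4 : ∑ i ∈ Finset.range (2*M+1), (if i % 2 = 0 then ((2*M-1).choose i : ℚ) * Ht (2*M - i) else 0)
      = ∑ i ∈ Finset.range (2*M), (if i % 2 = 0 then ((2*M-1).choose i : ℚ) * Ht (2*M - i) else 0) := by
    rw [Finset.sum_range_succ, Nat.choose_eq_zero_of_lt (by omega)]
    by_cases h : (2*M) % 2 = 0
    · rw [if_pos h]; norm_num
    · rw [if_neg h]; norm_num
  rw [← e3, ← e4]
  rw [Finset.mul_sum, mul_sub, Finset.mul_sum, Finset.mul_sum]
  rw [← sub_eq_zero, ← Finset.sum_sub_distrib, ← Finset.sum_sub_distrib]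
  have key : ∀ v ∈ Finset.range (2*M + 1),
      (((M:ℚ) - 1) * (if v % 2 = 0 then ((2*M).choose v : ℚ) * Ht (2*M - v) else 0)
        - ((M:ℚ) * (if v % 2 = 0 then ((2*M-1).choose v : ℚ) * Ht (2*M - v) else 0)
          - (M:ℚ) * (if v % 2 = 0 ∧ 1 ≤ v then ((2*M-1).choose (v-1) : ℚ) * Ht (2*M - v) else 0)))
      = -(if v % 2 = 0 then ((2*M).choose v : ℚ) * (1 - (v:ℚ)) * Ht (2*M - v) else 0) := by
    intro v hv
    simp only [Finset.mem_range] at hv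
    by_cases h : v % 2 = 0
    · by_cases h1 : 1 ≤ v
      · rw [if_pos h, if_pos h, if_pos ⟨h, h1⟩, if_pos h]
        have hp : ((2*M).choose v : ℚ) = ((2*M-1).choose (v-1) : ℚ) + ((2*M-1).choose v : ℚ) := by
          have := Nat.choose_succ_succ (2*M-1) (v-1)
          simp only [Nat.succ_eq_add_one] at this
          rw [show 2*M-1+1 = 2*M by omega, show v-1+1 = v by omega] at this
          exact_mod_cast this
        have hs : ((2:ℚ)*M) * ((2*M-1).choose (v-1) : ℚ) = ((2*M).choose v : ℚ) * (v:ℚ) := by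
          have := Nat.add_one_mul_choose_eq (2*M-1) (v-1)
          rw [show 2*M-1+1 = 2*M by omega, show v-1+1 = v by omega] at this
          exact_mod_cast this
        linear_combination (Ht (2*M - v) * (M:ℚ)) * hp + Ht (2*M - v) * hs
      · have hv0 : v = 0 := by omega
        subst hv0
        rw [if_pos h, if_pos h, if_neg (by omega), if_pos h]
        simp only [Nat.choose_zero_right, Nat.cast_one, Nat.cast_ofNat, Nat.sub_zero]
        ring
    · rw [if_neg h, if_neg h, if_neg (by omega), if_neg h]
      ring
  rw [Finset.sum_congr rfl key, Finset.sum_neg_distrib, hGG, neg_zero]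

lemma phat_zero : phat 0 0 = 1 := by
  simp [phat, p]

lemma rhat_zero : conv chat Harr 0 0 = 1 := by
  unfold conv
  rw [Finset.sum_range_one, Finset.sum_range_one]
  have c0 : chat 0 0 = 1 := by simp [chat]
  have h0 : Harr 0 0 = 1 := by simp [Harr, Ht_zero]
  rw [c0, h0]
  norm_num

theorem main_eq : ∀ N a b, a + b = N → phat a b = conv chat Harr a b := by
  intro N
  induction N using Nat.strong_induction_on with
  | _ N IH =>
    intro a b hab
    by_cases hodd : N % 2 = 1
    · rw [phat_odd a b (by omega),
        conv_parity chat Harr chat_parity Harr_parity a b (by omega)]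
    · rcases Nat.eq_zero_or_pos N with hN0 | hNpos
      · obtain ⟨rfl, rfl⟩ : a = 0 ∧ b = 0 := by omega
        rw [phat_zero, rhat_zero]
      · -- N even, N ≥ 2
        have hIH0 : ∀ x y : ℕ, x + y + 2 = N → phat x y - conv chat Harr x y = 0 := by
          intro x y h
          rw [sub_eq_zero]
          exact IH (x + y) (by omega) x y rfl
        have hq : ∀ t, t + 2 ≤ N →
            (phat (t+2) (N-(t+2)) - conv chat Harr (t+2) (N-(t+2)))
              + (phat t (N-t) - conv chat Harr t (N-t))
            = 2 * (phat (t+1) (N-(t+1)) - conv chat Harr (t+1) (N-(t+1))) := by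
          intro t ht
          have hb2 : N - (t+2) + 2 = N - t := by omega
          have hb1 : N - (t+2) + 1 = N - (t+1) := by omega
          have e1 := phat_pde t (N-(t+2))
          have e2 := conv_D2 chat Harr chat_pde Harr_flat t (N-(t+2))
          rw [hb2] at e1 e2
          have e3 := hIH0 t (N-(t+2)) (by omega)
          -- rewrite the (b+1) spots
          have hb1' : phat (t+1) (N-(t+2)+1) = phat (t+1) (N-(t+1)) := by rw [hb1]
          have hb1'' : conv chat Harr (t+1) (N-(t+2)+1) = conv chat Harr (t+1) (N-(t+1)) := by
            rw [hb1]
          rw [hb1'] at e1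
          rw [hb1''] at e2
          linarith [e1, e2, e3]
        have hconst : ∀ t, t ≤ N →
            phat t (N-t) - conv chat Harr t (N-t)
              = phat 0 N - conv chat Harr 0 N
                + (t:ℚ) * ((phat 1 (N-1) - conv chat Harr 1 (N-1))
                  - (phat 0 N - conv chat Harr 0 N)) := by
          intro t
          induction t using Nat.strong_induction_on with
          | _ t IHt =>
            intro htN
            match t with
            | 0 => simp only [Nat.sub_zero]; push_cast; ring
            | 1 => push_cast; ring
            | (t+2) =>
              have h1 := IHt (t+1) (by omega) (by omega)
              have h0 := IHt t (by omega) (by omega)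
              have hstep := hq t (by omega)
              push_cast
              push_cast at h1 h0
              linarith [hstep, h1, h0]
        -- symmetry forces the linear coefficient to vanish
        have hsymm : ∀ x y : ℕ, phat x y - conv chat Harr x y
            = phat y x - conv chat Harr y x := by
          intro x y
          rw [phat_symm, conv_symm chat Harr chat_symm Harr_symm]
        have hNN := hconst N (le_refl N)
        rw [Nat.sub_self] at hNN
        have hN0' : phat N 0 - conv chat Harr N 0 = phat 0 N - conv chat Harr 0 N := by
          have := hsymm N 0
          rw [this]
        have hlin : ((N:ℚ)) * ((phat 1 (N-1) - conv chat Harr 1 (N-1))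
            - (phat 0 N - conv chat Harr 0 N)) = 0 := by
          rw [hN0'] at hNN
          linarith [hNN]
        have hNne : (N:ℚ) ≠ 0 := by
          simp only [ne_eq, Nat.cast_eq_zero]; omega
        have hd1 : (phat 1 (N-1) - conv chat Harr 1 (N-1))
            - (phat 0 N - conv chat Harr 0 N) = 0 := by
          rcases mul_eq_zero.mp hlin with h | h
          · exact absurd h hNne
          · exact h
        have hconst' : ∀ t, t ≤ N →
            phat t (N-t) - conv chat Harr t (N-t) = phat 0 N - conv chat Harr 0 N := by
          intro t ht
          rw [hconst t ht, hd1]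
          ring
        -- pin the constant via the edge relation
        obtain ⟨M, hM, hM1⟩ : ∃ M, N = 2*M ∧ 1 ≤ M := ⟨N/2, by omega, by omega⟩
        have he1 := phat_edge M hM1
        have he2 := rhat_edge M hM1
        have hv1 : phat (2*M) 0 - conv chat Harr (2*M) 0 = phat 0 N - conv chat Harr 0 N := by
          have := hconst' N (le_refl N)
          rw [Nat.sub_self] at this
          rw [← hM]
          exact this
        have hv2 : phat (2*M-1) 1 - conv chat Harr (2*M-1) 1
            = phat 0 N - conv chat Harr 0 N := by
          have := hconst' (N-1) (by omega)
          rw [show N - (N-1) = 1 by omega] at this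
          rw [show 2*M - 1 = N - 1 by omega]
          exact this
        set c := phat 0 N - conv chat Harr 0 N with hc
        have hcz : c = 0 := by
          have : ((M:ℚ) - 1) * (phat (2*M) 0 - conv chat Harr (2*M) 0)
              = (M:ℚ) * (phat (2*M-1) 1 - conv chat Harr (2*M-1) 1) := by
            rw [mul_sub, mul_sub, he1, he2]
          rw [hv1, hv2] at this
          linarith [this]
        have hfin := hconst' a (by omega)
        rw [show N - a = b by omega] at hfin
        rw [hcz] at hfin
        exact sub_eq_zero.mp hfin

noncomputable section Bridge

open MvPowerSeries

def e2f (i j : ℕ) : Fin 2 →₀ ℕ := Finsupp.single 0 i + Finsupp.single 1 j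

@[simp] lemma e2f_0 (i j : ℕ) : e2f i j 0 = i := by
  simp [e2f, Finsupp.single_apply]

@[simp] lemma e2f_1 (i j : ℕ) : e2f i j 1 = j := by
  simp [e2f, Finsupp.single_apply]

lemma eq_e2f (d : Fin 2 →₀ ℕ) : d = e2f (d 0) (d 1) := by
  ext x
  fin_cases x
  · simp
  · simp

lemma e2f_add (i j k l : ℕ) : e2f i j + e2f k l = e2f (i+k) (j+l) := by
  ext x
  fin_cases x
  · simp
  · simp

lemma e2f_inj {i j k l : ℕ} (h : e2f i j = e2f k l) : i = k ∧ j = l := by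
  constructor
  · have := DFunLike.congr_fun h 0
    simpa using this
  · have := DFunLike.congr_fun h 1
    simpa using this

lemma coeff_mul_fin2 (A B : MvPowerSeries (Fin 2) ℚ) (a b : ℕ) :
    (coeff (e2f a b)) (A * B)
      = ∑ i ∈ Finset.range (a+1), ∑ j ∈ Finset.range (b+1),
          (coeff (e2f i j)) A * (coeff (e2f (a-i) (b-j))) B := by
  rw [MvPowerSeries.coeff_mul]
  rw [← Finset.sum_product']
  apply Finset.sum_nbij' (fun p => (p.1 0, p.1 1))
    (fun q => (e2f q.1 q.2, e2f (a - q.1) (b - q.2)))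
  · intro x hx
    rw [Finset.HasAntidiagonal.mem_antidiagonal] at hx
    have h0 : x.1 0 + x.2 0 = a := by
      have := DFunLike.congr_fun hx 0
      simpa using this
    have h1 : x.1 1 + x.2 1 = b := by
      have := DFunLike.congr_fun hx 1
      simpa using this
    simp only [Finset.mem_product, Finset.mem_range]
    omega
  · intro q hq
    simp only [Finset.mem_product, Finset.mem_range] at hq
    rw [Finset.HasAntidiagonal.mem_antidiagonal, e2f_add]
    congr 1 <;> omega
  · intro x hx
    rw [Finset.HasAntidiagonal.mem_antidiagonal] at hx
    have h0 : x.1 0 + x.2 0 = a := by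
      have := DFunLike.congr_fun hx 0
      simpa using this
    have h1 : x.1 1 + x.2 1 = b := by
      have := DFunLike.congr_fun hx 1
      simpa using this
    have e1 : e2f (x.1 0) (x.1 1) = x.1 := (eq_e2f x.1).symm
    have e2 : e2f (a - x.1 0) (b - x.1 1) = x.2 := by
      rw [show a - x.1 0 = x.2 0 by omega, show b - x.1 1 = x.2 1 by omega]
      exact (eq_e2f x.2).symm
    simp only [e1, e2]
  · intro q hq
    simp only [e2f_0, e2f_1]
  · intro x hx
    rw [Finset.HasAntidiagonal.mem_antidiagonal] at hx
    have h0 : x.1 0 + x.2 0 = a := by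
      have := DFunLike.congr_fun hx 0
      simpa using this
    have h1 : x.1 1 + x.2 1 = b := by
      have := DFunLike.congr_fun hx 1
      simpa using this
    have e1 : e2f (x.1 0) (x.1 1) = x.1 := (eq_e2f x.1).symm
    have e2 : e2f (a - x.1 0) (b - x.1 1) = x.2 := by
      rw [show a - x.1 0 = x.2 0 by omega, show b - x.1 1 = x.2 1 by omega]
      exact (eq_e2f x.2).symm
    rw [e1, e2]

def nz (A : MvPowerSeries (Fin 2) ℚ) : Arr := fun a b =>
  ((a.factorial : ℚ) * (b.factorial : ℚ)) * (coeff (e2f a b)) A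

lemma nz_mul (A B : MvPowerSeries (Fin 2) ℚ) (a b : ℕ) :
    nz (A * B) a b = conv (nz A) (nz B) a b := by
  unfold nz conv
  rw [coeff_mul_fin2, Finset.mul_sum]
  apply Finset.sum_congr rfl
  intro i hi
  simp only [Finset.mem_range] at hi
  rw [Finset.mul_sum, Finset.mul_sum]
  apply Finset.sum_congr rfl
  intro j hj
  simp only [Finset.mem_range] at hj
  have hA : ((a.choose i : ℚ)) * (i.factorial : ℚ) * ((a-i).factorial : ℚ) = (a.factorial : ℚ) := by
    exact_mod_cast congrArg (Nat.cast : ℕ → ℚ) (Nat.choose_mul_factorial_mul_factorial (by omega : i ≤ a))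
  have hB : ((b.choose j : ℚ)) * (j.factorial : ℚ) * ((b-j).factorial : ℚ) = (b.factorial : ℚ) := by
    exact_mod_cast congrArg (Nat.cast : ℕ → ℚ) (Nat.choose_mul_factorial_mul_factorial (by omega : j ≤ b))
  rw [← hA, ← hB]
  ring

end Bridge

/-- `h(x+y)` where `h = 1/(cosh w - w sinh w)`. -/
noncomputable def Hxy : MvPowerSeries (Fin 2) ℚ := fun d =>
  Ht (d 0 + d 1) / ((d 0).factorial * (d 1).factorial)

section NZ

open MvPowerSeries

lemma factfact_ne (a b : ℕ) : ((a.factorial : ℚ) * (b.factorial : ℚ)) ≠ 0 := by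
  positivity

lemma coeff_eq (A : MvPowerSeries (Fin 2) ℚ) (d : Fin 2 →₀ ℕ) :
    (coeff d) A = A d := rfl

lemma nz_Pxy (a b : ℕ) : nz Pxy a b = phat a b := by
  unfold nz phat
  rw [coeff_eq]
  show ((a.factorial : ℚ) * (b.factorial : ℚ)) *
    (if (e2f a b 0 + e2f a b 1) % 2 = 0 then _ else 0) = _
  rw [e2f_0, e2f_1]
  by_cases h : (a + b) % 2 = 0
  · rw [if_pos h, if_pos h]
    rw [mul_div_assoc']
    rw [mul_comm, mul_div_assoc]
    rw [div_self (by push_cast; positivity), mul_one]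
  · rw [if_neg h, if_neg h, mul_zero]

lemma nz_coshXmY (a b : ℕ) : nz coshXmY a b = chat a b := by
  unfold nz chat
  rw [coeff_eq]
  show ((a.factorial : ℚ) * (b.factorial : ℚ)) *
    (if (e2f a b 0 + e2f a b 1) % 2 = 0 then _ else 0) = _
  rw [e2f_0, e2f_1]
  by_cases h : (a + b) % 2 = 0
  · rw [if_pos h, if_pos h]
    rw [mul_div_assoc']
    rw [mul_comm, mul_div_assoc]
    rw [div_self (by push_cast; positivity), mul_one]
  · rw [if_neg h, if_neg h, mul_zero]

lemma nz_Hxy (a b : ℕ) : nz Hxy a b = Harr a b := by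
  unfold nz Harr
  rw [coeff_eq]
  show ((a.factorial : ℚ) * (b.factorial : ℚ)) * (Ht (e2f a b 0 + e2f a b 1) / _) = _
  rw [e2f_0, e2f_1]
  rw [mul_div_assoc']
  rw [mul_comm, mul_div_assoc]
  rw [div_self (by push_cast; positivity), mul_one]

end NZ

section NZ2
open MvPowerSeries

lemma coeff_X0 (i j : ℕ) :
    (coeff (e2f i j)) (X 0 : MvPowerSeries (Fin 2) ℚ) = if i = 1 ∧ j = 0 then 1 else 0 := by
  rw [MvPowerSeries.coeff_X]
  have he : (Finsupp.single (0 : Fin 2) 1) = e2f 1 0 := by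
    unfold e2f
    rw [Finsupp.single_zero, add_zero]
  rw [he]
  by_cases h : i = 1 ∧ j = 0
  · obtain ⟨rfl, rfl⟩ := h
    rw [if_pos rfl, if_pos ⟨rfl, rfl⟩]
  · rw [if_neg h, if_neg (fun hh => h (e2f_inj hh))]

lemma coeff_X1 (i j : ℕ) :
    (coeff (e2f i j)) (X 1 : MvPowerSeries (Fin 2) ℚ) = if i = 0 ∧ j = 1 then 1 else 0 := by
  rw [MvPowerSeries.coeff_X]
  have he : (Finsupp.single (1 : Fin 2) 1) = e2f 0 1 := by
    unfold e2f
    rw [Finsupp.single_zero, zero_add]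
  rw [he]
  by_cases h : i = 0 ∧ j = 1
  · obtain ⟨rfl, rfl⟩ := h
    rw [if_pos rfl, if_pos ⟨rfl, rfl⟩]
  · rw [if_neg h, if_neg (fun hh => h (e2f_inj hh))]

lemma coeff_X0_mul (Sx : MvPowerSeries (Fin 2) ℚ) (a b : ℕ) :
    (coeff (e2f a b)) ((X 0) * Sx)
      = if 1 ≤ a then (coeff (e2f (a-1) b)) Sx else 0 := by
  rw [coeff_mul_fin2]
  have hin : ∀ i ∈ Finset.range (a+1),
      (∑ j ∈ Finset.range (b+1), (coeff (e2f i j)) (X 0 : MvPowerSeries (Fin 2) ℚ)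
        * (coeff (e2f (a-i) (b-j))) Sx)
      = if i = 1 then (coeff (e2f (a-1) b)) Sx else 0 := by
    intro i _
    by_cases h : i = 1
    · subst h
      rw [if_pos rfl]
      have hj : ∀ j ∈ Finset.range (b+1),
          (coeff (e2f 1 j)) (X 0 : MvPowerSeries (Fin 2) ℚ) * (coeff (e2f (a-1) (b-j))) Sx
          = if j = 0 then (coeff (e2f (a-1) b)) Sx else 0 := by
        intro j _
        rw [coeff_X0]
        by_cases hj0 : j = 0
        · subst hj0
          rw [if_pos ⟨rfl, rfl⟩, if_pos rfl, one_mul]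
          norm_num
        · rw [if_neg (by tauto), if_neg hj0, zero_mul]
      rw [Finset.sum_congr rfl hj,
        Finset.sum_ite_eq' (Finset.range (b+1)) 0 (fun _ => (coeff (e2f (a-1) b)) Sx),
        if_pos (Finset.mem_range.mpr (by omega))]
    · rw [if_neg h]
      apply Finset.sum_eq_zero
      intro j _
      rw [coeff_X0, if_neg (by tauto), zero_mul]
  rw [Finset.sum_congr rfl hin,
    Finset.sum_ite_eq' (Finset.range (a+1)) 1 (fun _ => (coeff (e2f (a-1) b)) Sx)]
  by_cases ha : 1 ≤ a
  · rw [if_pos (Finset.mem_range.mpr (by omega)), if_pos ha]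
  · rw [if_neg (by simp only [Finset.mem_range]; omega), if_neg ha]

lemma coeff_X1_mul (Sx : MvPowerSeries (Fin 2) ℚ) (a b : ℕ) :
    (coeff (e2f a b)) ((X 1) * Sx)
      = if 1 ≤ b then (coeff (e2f a (b-1))) Sx else 0 := by
  rw [coeff_mul_fin2]
  have hin : ∀ i ∈ Finset.range (a+1),
      (∑ j ∈ Finset.range (b+1), (coeff (e2f i j)) (X 1 : MvPowerSeries (Fin 2) ℚ)
        * (coeff (e2f (a-i) (b-j))) Sx)
      = if i = 0 then (if 1 ≤ b then (coeff (e2f a (b-1))) Sx else 0) else 0 := by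
    intro i _
    by_cases h : i = 0
    · subst h
      rw [if_pos rfl]
      have hj : ∀ j ∈ Finset.range (b+1),
          (coeff (e2f 0 j)) (X 1 : MvPowerSeries (Fin 2) ℚ) * (coeff (e2f (a-0) (b-j))) Sx
          = if j = 1 then (coeff (e2f a (b-1))) Sx else 0 := by
        intro j _
        rw [coeff_X1]
        by_cases hj1 : j = 1
        · subst hj1
          rw [if_pos ⟨rfl, rfl⟩, if_pos rfl, one_mul]
          norm_num
        · rw [if_neg (by tauto), if_neg hj1, zero_mul]
      rw [Finset.sum_congr rfl hj,
        Finset.sum_ite_eq' (Finset.range (b+1)) 1 (fun _ => (coeff (e2f a (b-1))) Sx)]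
      by_cases hb : 1 ≤ b
      · rw [if_pos (Finset.mem_range.mpr (by omega)), if_pos hb]
      · rw [if_neg (by simp only [Finset.mem_range]; omega), if_neg hb]
    · rw [if_neg h]
      apply Finset.sum_eq_zero
      intro j _
      rw [coeff_X1, if_neg (by tauto), zero_mul]
  rw [Finset.sum_congr rfl hin,
    Finset.sum_ite_eq' (Finset.range (a+1)) 0 (fun _ => if 1 ≤ b then (coeff (e2f a (b-1))) Sx else 0),
    if_pos (Finset.mem_range.mpr (by omega))]

lemma fact_ratio (a b : ℕ) (ha : 1 ≤ a) :
    ((a.factorial : ℚ) * (b.factorial : ℚ)) * ((1:ℚ)/(((a-1).factorial : ℚ) * (b.factorial : ℚ)))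
      = (a : ℚ) := by
  have h : (a : ℚ) * ((a-1).factorial : ℚ) = (a.factorial : ℚ) := by
    exact_mod_cast congrArg (Nat.cast : ℕ → ℚ) (Nat.mul_factorial_pred (by omega))
  rw [← h]
  have h1 : ((a-1).factorial : ℚ) ≠ 0 := by positivity
  have h2 : ((b).factorial : ℚ) ≠ 0 := by positivity
  field_simp

lemma nz_G (a b : ℕ) :
    nz (coshXY - (X 0 + X 1) * sinhXY) a b = ghat a b := by
  unfold nz
  rw [map_sub, add_mul, map_add, coeff_X0_mul, coeff_X1_mul]
  have hc : (coeff (e2f a b)) coshXY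
      = if (a + b) % 2 = 0 then (1 : ℚ) / ((a.factorial : ℚ) * (b.factorial : ℚ)) else 0 := by
    rw [coeff_eq]
    show (if (e2f a b 0 + e2f a b 1) % 2 = 0 then _ else (0:ℚ)) = _
    rw [e2f_0, e2f_1]
  have hs0 : (coeff (e2f (a-1) b)) sinhXY
      = if ((a-1) + b) % 2 = 1 then (1 : ℚ) / (((a-1).factorial : ℚ) * (b.factorial : ℚ)) else 0 := by
    rw [coeff_eq]
    show (if (e2f (a-1) b 0 + e2f (a-1) b 1) % 2 = 1 then _ else (0:ℚ)) = _
    rw [e2f_0, e2f_1]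
  have hs1 : (coeff (e2f a (b-1))) sinhXY
      = if (a + (b-1)) % 2 = 1 then (1 : ℚ) / ((a.factorial : ℚ) * ((b-1).factorial : ℚ)) else 0 := by
    rw [coeff_eq]
    show (if (e2f a (b-1) 0 + e2f a (b-1) 1) % 2 = 1 then _ else (0:ℚ)) = _
    rw [e2f_0, e2f_1]
  rw [hc, hs0, hs1]
  unfold ghat
  by_cases h : (a + b) % 2 = 0
  · rw [if_pos h, if_pos h]
    have e1 : ((a.factorial : ℚ) * (b.factorial : ℚ))
        * ((1:ℚ) / ((a.factorial : ℚ) * (b.factorial : ℚ))) = 1 := by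
      rw [mul_one_div, div_self (factfact_ne a b)]
    have e2 : (if 1 ≤ a then (if ((a-1) + b) % 2 = 1
          then (1 : ℚ) / (((a-1).factorial : ℚ) * (b.factorial : ℚ)) else 0) else 0)
        = if 1 ≤ a then (1 : ℚ) / (((a-1).factorial : ℚ) * (b.factorial : ℚ)) else 0 := by
      by_cases ha : 1 ≤ a
      · rw [if_pos ha, if_pos ha, if_pos (by omega)]
      · rw [if_neg ha, if_neg ha]
    have e3 : (if 1 ≤ b then (if (a + (b-1)) % 2 = 1
          then (1 : ℚ) / ((a.factorial : ℚ) * ((b-1).factorial : ℚ)) else 0) else 0)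
        = if 1 ≤ b then (1 : ℚ) / ((a.factorial : ℚ) * ((b-1).factorial : ℚ)) else 0 := by
      by_cases hb : 1 ≤ b
      · rw [if_pos hb, if_pos hb, if_pos (by omega)]
      · rw [if_neg hb, if_neg hb]
    rw [e2, e3, mul_sub, mul_add, e1]
    have e4 : ((a.factorial : ℚ) * (b.factorial : ℚ))
        * (if 1 ≤ a then (1 : ℚ) / (((a-1).factorial : ℚ) * (b.factorial : ℚ)) else 0)
        = (a : ℚ) := by
      by_cases ha : 1 ≤ a
      · rw [if_pos ha, fact_ratio a b ha]
      · rw [if_neg ha, mul_zero]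
        have : a = 0 := by omega
        rw [this]
        norm_num
    have e5 : ((a.factorial : ℚ) * (b.factorial : ℚ))
        * (if 1 ≤ b then (1 : ℚ) / ((a.factorial : ℚ) * ((b-1).factorial : ℚ)) else 0)
        = (b : ℚ) := by
      by_cases hb : 1 ≤ b
      · rw [if_pos hb, mul_comm ((a.factorial : ℚ)) ((b.factorial : ℚ)),
          mul_comm ((a.factorial : ℚ)) (((b-1).factorial : ℚ)), fact_ratio b a hb]
      · rw [if_neg hb, mul_zero]
        have : b = 0 := by omega
        rw [this]
        norm_num
    rw [e4, e5]
    ring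
  · rw [if_neg h, if_neg h]
    have e2 : (if 1 ≤ a then (if ((a-1) + b) % 2 = 1
          then (1 : ℚ) / (((a-1).factorial : ℚ) * (b.factorial : ℚ)) else 0) else 0) = 0 := by
      by_cases ha : 1 ≤ a
      · rw [if_pos ha, if_neg (by omega)]
      · rw [if_neg ha]
    have e3 : (if 1 ≤ b then (if (a + (b-1)) % 2 = 1
          then (1 : ℚ) / ((a.factorial : ℚ) * ((b-1).factorial : ℚ)) else 0) else 0) = 0 := by
      by_cases hb : 1 ≤ b
      · rw [if_pos hb, if_neg (by omega)]
      · rw [if_neg hb]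
    rw [e2, e3]
    ring
end NZ2

section Final
open MvPowerSeries

lemma conv_Hg_row0 (t : ℕ) : conv Harr ghat t 0 = if t = 0 then 1 else 0 := by
  unfold conv
  have hterm : ∀ i ∈ Finset.range (t+1),
      ((t.choose i : ℚ) * ∑ j ∈ Finset.range (0 + 1),
        ((0:ℕ).choose j : ℚ) * Harr i j * ghat (t - i) (0 - j))
      = (t.choose i : ℚ) * Ht i * ghat (t - i) 0 := by
    intro i _
    rw [Finset.sum_range_one]
    show (t.choose i : ℚ) * (((0:ℕ).choose 0 : ℚ) * Ht (i + 0) * ghat (t - i) 0) = _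
    norm_num
    ring
  rw [Finset.sum_congr rfl hterm]
  by_cases ht2 : t % 2 = 0
  · have hGG := GG t ht2
    rw [← Finset.sum_range_reflect] at hGG
    rw [← hGG]
    apply Finset.sum_congr rfl
    intro i hi
    simp only [Finset.mem_range] at hi
    have hle : i ≤ t := by omega
    rw [show t + 1 - 1 - i = t - i by omega]
    unfold ghat
    by_cases h : (t - i) % 2 = 0
    · rw [if_pos (by omega), if_pos h]
      rw [Nat.choose_symm hle, show t - (t - i) = i by omega]
      push_cast [Nat.cast_sub hle]
      ring
    · rw [if_neg (by omega), if_neg h]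
      ring
  · rw [if_neg (by omega)]
    apply Finset.sum_eq_zero
    intro i hi
    simp only [Finset.mem_range] at hi
    rcases Nat.even_or_odd i with h | h
    · rw [Nat.even_iff] at h
      rw [ghat_parity (t-i) 0 (by omega)]
      ring
    · rw [Nat.odd_iff] at h
      rw [Ht_odd i h]
      ring

lemma e2f_zero_iff (a b : ℕ) : e2f a b = 0 ↔ a = 0 ∧ b = 0 := by
  constructor
  · intro h
    have h0 := DFunLike.congr_fun h 0
    have h1 := DFunLike.congr_fun h 1
    simp at h0 h1
    exact ⟨h0, h1⟩
  · rintro ⟨rfl, rfl⟩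
    ext x
    fin_cases x <;> simp

lemma nz_chat_eq : nz coshXmY = chat := funext fun a => funext fun b => nz_coshXmY a b
lemma nz_Hxy_eq : nz Hxy = Harr := funext fun a => funext fun b => nz_Hxy a b
lemma nz_G_eq : nz (coshXY - (X 0 + X 1) * sinhXY) = ghat :=
  funext fun a => funext fun b => nz_G a b

lemma h1_eq : Pxy = coshXmY * Hxy := by
  apply MvPowerSeries.ext
  intro d
  rw [eq_e2f d]
  apply mul_left_cancel₀ (factfact_ne (d 0) (d 1))
  have lhs : ((((d 0).factorial : ℚ)) * (((d 1).factorial : ℚ)))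
      * (coeff (e2f (d 0) (d 1))) Pxy = phat (d 0) (d 1) := nz_Pxy (d 0) (d 1)
  have rhs : ((((d 0).factorial : ℚ)) * (((d 1).factorial : ℚ)))
      * (coeff (e2f (d 0) (d 1))) (coshXmY * Hxy) = conv chat Harr (d 0) (d 1) := by
    have := nz_mul coshXmY Hxy (d 0) (d 1)
    rw [nz_chat_eq, nz_Hxy_eq] at this
    exact this
  rw [lhs, rhs]
  exact main_eq (d 0 + d 1) (d 0) (d 1) rfl

lemma h2_eq : Hxy * (coshXY - (X 0 + X 1) * sinhXY) = 1 := by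
  apply MvPowerSeries.ext
  intro d
  rw [eq_e2f d]
  apply mul_left_cancel₀ (factfact_ne (d 0) (d 1))
  have lhs : ((((d 0).factorial : ℚ)) * (((d 1).factorial : ℚ)))
      * (coeff (e2f (d 0) (d 1))) (Hxy * (coshXY - (X 0 + X 1) * sinhXY))
      = conv Harr ghat (d 0) (d 1) := by
    have := nz_mul Hxy (coshXY - (X 0 + X 1) * sinhXY) (d 0) (d 1)
    rw [nz_Hxy_eq, nz_G_eq] at this
    exact this
  rw [lhs, conv_sumdep Harr ghat Harr_flat ghat_flat (d 1) (d 0), conv_Hg_row0]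
  rw [MvPowerSeries.coeff_one]
  by_cases h : d 0 + d 1 = 0
  · rw [if_pos h, if_pos ((e2f_zero_iff (d 0) (d 1)).mpr (by omega))]
    rw [show d 0 = 0 by omega, show d 1 = 0 by omega]
    norm_num
  · rw [if_neg h, if_neg (fun hh => h (by
      obtain ⟨h0, h1⟩ := (e2f_zero_iff (d 0) (d 1)).mp hh
      omega))]
    ring
end Final

/-- `P(x,y) (cosh(x+y) - (x+y) sinh(x+y)) = cosh(x-y)` in `ℚ[[x,y]]`. -/
theorem Pxy_identity :
    Pxy * (coshXY - (MvPowerSeries.X 0 + MvPowerSeries.X 1) * sinhXY) = coshXmY := by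
  rw [h1_eq, mul_assoc, h2_eq, mul_one]
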